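/- Let F : C → B and G : D → B be Galois coverings of k-categories, and let (H,J) be a morphism from F to G. Then there is a unique group homomorphism Λ : Aut₁F → Aut₁G such that Λ(f) ∘ H = H ∘ f for every f ∈ Aut₁F; moreover Λ is surjective and its kernel is {f ∈ Aut₁F : H ∘ f = H}. -/

import Mathlib

open CategoryTheory

universe w v u

section CoveringDefs

variable (k : Type w) [CommRing k]

/-- A functor between `k`-linear categories is `k`-linear:
it is additive and commutes with the scalar action on morphisms. -/
def IsLinearFunctor {C : Type u} [Category.{v} C] [Preadditive C] [CategoryTheory.Linear k C]
    {B : Type u} [Category.{v} B] [Preadditive B] [CategoryTheory.Linear k B]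
    (F : C ⥤ B) : Prop :=
  (∀ (x y : C) (f g : x ⟶ y), F.map (f + g) = F.map f + F.map g) ∧
  (∀ (x y : C) (r : k) (f : x ⟶ y), F.map (r • f) = r • F.map f)

variable {C : Type u} [Category.{v} C] [Preadditive C] [CategoryTheory.Linear k C]
variable {B : Type u} [Category.{v} B] [Preadditive B] [CategoryTheory.Linear k B]

/-- The canonical map `⊕_{y ∈ F⁻¹(c)} C(x,y) →+ B(F(x),c)` induced by `F`
on the source star. -/
noncomputable def starOutHom (F : C ⥤ B) (hF : IsLinearFunctor k F) (x : C) (c : B) :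
    (DirectSum {y : C // F.obj y = c} (fun y => (x ⟶ y.1))) →+ (F.obj x ⟶ c) := by
  classical
  exact DirectSum.toAddMonoid fun y =>
    AddMonoidHom.mk' (fun f => F.map f ≫ eqToHom y.2)
      (fun f g => by (try simp only []); rw [hF.1 _ _ f g, Preadditive.add_comp])

/-- The canonical map `⊕_{y ∈ F⁻¹(c)} C(y,x) →+ B(c,F(x))` induced by `F`
on the target star. -/
noncomputable def starInHom (F : C ⥤ B) (hF : IsLinearFunctor k F) (x : C) (c : B) :
    (DirectSum {y : C // F.obj y = c} (fun y => (y.1 ⟶ x))) →+ (c ⟶ F.obj x) := by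
  classical
  exact DirectSum.toAddMonoid fun y =>
    AddMonoidHom.mk' (fun f => eqToHom y.2.symm ≫ F.map f)
      (fun f g => by (try simp only []); rw [hF.1 _ _ f g, Preadditive.comp_add])

/-- `F : C ⥤ B` is a covering of `k`-categories: it is a `k`-linear functor,
surjective on objects, inducing bijections on all source and target stars. -/
def IsCovering (F : C ⥤ B) : Prop :=
  ∃ hF : IsLinearFunctor k F,
    Function.Surjective F.obj ∧
    (∀ (x : C) (c : B), Function.Bijective (starOutHom k F hF x c)) ∧
    (∀ (x : C) (c : B), Function.Bijective (starInHom k F hF x c))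

end CoveringDefs

/-- A `k`-category is connected if the equivalence relation generated by
"there is a nonzero morphism from `x` to `y`" relates any two objects. -/
def IsConnectedKCat (C : Type u) [Category.{v} C] [Preadditive C] : Prop :=
  ∀ x y : C, Relation.EqvGen (fun a b : C => ∃ f : a ⟶ b, f ≠ 0) x y

section GaloisDefs

variable (k : Type w) [CommRing k]
variable {C : Type u} [Category.{v} C] [Preadditive C] [CategoryTheory.Linear k C]
variable {B : Type u} [Category.{v} B] [Preadditive B] [CategoryTheory.Linear k B]
variable {D : Type u} [Category.{v} D] [Preadditive D] [CategoryTheory.Linear k D]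

/-- `H` belongs to `Aut₁ F`: it is an invertible `k`-linear endofunctor with `F ∘ H = F`. -/
def MemAut1 (F : C ⥤ B) (H : C ⥤ C) : Prop :=
  IsLinearFunctor k H ∧
  (∃ Hinv : C ⥤ C, H ⋙ Hinv = 𝟭 C ∧ Hinv ⋙ H = 𝟭 C) ∧
  H ⋙ F = F

/-- A covering is Galois if its source is connected and `Aut₁ F` acts transitively
on some fibre. -/
def IsGaloisCovering (F : C ⥤ B) : Prop :=
  IsCovering k F ∧ IsConnectedKCat C ∧
  ∃ b₀ : B, ∀ x y : C, F.obj x = b₀ → F.obj y = b₀ →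
    ∃ H : C ⥤ C, MemAut1 k F H ∧ H.obj x = y

/-- A morphism `(H, J)` of coverings from `F : C ⥤ B` to `G : D ⥤ B`:
`H` and `J` are `k`-linear, `J` is an isomorphism which is the identity on objects,
and `G ∘ H = J ∘ F`. -/
def IsCoveringMorphism (F : C ⥤ B) (G : D ⥤ B) (H : C ⥤ D) (J : B ⥤ B) : Prop :=
  IsLinearFunctor k H ∧ IsLinearFunctor k J ∧
  (∃ Jinv : B ⥤ B, J ⋙ Jinv = 𝟭 B ∧ Jinv ⋙ J = 𝟭 B) ∧
  (∀ b : B, J.obj b = b) ∧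
  H ⋙ G = F ⋙ J

end GaloisDefs

/-- A universal covering: a Galois covering `U` such that for every Galois covering
`F : C ⥤ B` and every pair of objects `u₀`, `c₀` above the same object of `B`,
there is a unique `k`-linear functor `H` with `F ∘ H = U` and `H u₀ = c₀`. -/
def IsUniversalCovering (k : Type w) [CommRing k]
    {U' : Type u} [Category.{v} U'] [Preadditive U'] [CategoryTheory.Linear k U']
    {B : Type u} [Category.{v} B] [Preadditive B] [CategoryTheory.Linear k B]
    (U : U' ⥤ B) : Prop :=
  IsGaloisCovering k U ∧
  ∀ (C : Type u) [Category.{v} C] [Preadditive C] [CategoryTheory.Linear k C]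
    (F : C ⥤ B), IsGaloisCovering k F →
    ∀ (u₀ : U') (c₀ : C), U.obj u₀ = F.obj c₀ →
      ∃! H : U' ⥤ C, IsLinearFunctor k H ∧ H ⋙ F = U ∧ H.obj u₀ = c₀

/-- Given a functor `F : C ⥤ B`, a choice `x` of objects of `C` above each object of `B`,
and an endofunctor `H` of `C`, the subset `Z_H(c,b) = F(C(x_b, H x_c))` of `B(b,c)`. -/
def gradeSet {C : Type u} [Category.{v} C] {B : Type u} [Category.{v} B]
    (F : C ⥤ B) (x : B → C) (H : C ⥤ C) (b c : B) : Set (b ⟶ c) :=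
  {g | ∃ (h₁ : b = F.obj (x b)) (h₂ : F.obj (H.obj (x c)) = c)
        (f : x b ⟶ H.obj (x c)), g = eqToHom h₁ ≫ F.map f ≫ eqToHom h₂}

/-- The homogeneous component `Z_H(c,b)` as a `k`-submodule of `B(b,c)`. -/
noncomputable def gradeSubmodule (k : Type w) [CommRing k]
    {C : Type u} [Category.{v} C]
    {B : Type u} [Category.{v} B] [Preadditive B] [CategoryTheory.Linear k B]
    (F : C ⥤ B) (x : B → C) (H : C ⥤ C) (b c : B) : Submodule k (b ⟶ c) :=
  Submodule.span k (gradeSet F x H b c)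

section AuxLemmas

open scoped Classical

variable {k : Type w} [CommRing k]
variable {C : Type u} [Category.{v} C] [Preadditive C] [CategoryTheory.Linear k C]
variable {B : Type u} [Category.{v} B] [Preadditive B] [CategoryTheory.Linear k B]

lemma starOutHom_of (F : C ⥤ B) (hF : IsLinearFunctor k F) {x : C} {c : B}
    (y : {y : C // F.obj y = c}) (f : x ⟶ y.1) :
    starOutHom k F hF x c (DirectSum.of (fun y : {y : C // F.obj y = c} => (x ⟶ y.1)) y f)
      = F.map f ≫ eqToHom y.2 := by
  unfold starOutHom
  rw [DirectSum.toAddMonoid_of]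
  rfl

lemma starInHom_of (F : C ⥤ B) (hF : IsLinearFunctor k F) {x : C} {c : B}
    (y : {y : C // F.obj y = c}) (f : y.1 ⟶ x) :
    starInHom k F hF x c (DirectSum.of (fun y : {y : C // F.obj y = c} => (y.1 ⟶ x)) y f)
      = eqToHom y.2.symm ≫ F.map f := by
  unfold starInHom
  rw [DirectSum.toAddMonoid_of]
  rfl

end AuxLemmas
section AuxLemmas2

open scoped Classical

variable {k : Type w} [CommRing k]
variable {C : Type u} [Category.{v} C] [Preadditive C] [CategoryTheory.Linear k C]
variable {B : Type u} [Category.{v} B] [Preadditive B] [CategoryTheory.Linear k B]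

lemma linear_map_zero (F : C ⥤ B) (hF : IsLinearFunctor k F) (x y : C) :
    F.map (0 : x ⟶ y) = 0 := by
  have := hF.2 x y 0 0
  simpa using this

lemma covering_map_injective (F : C ⥤ B) (hF : IsLinearFunctor k F)
    (hinj : ∀ x c, Function.Injective (starOutHom k F hF x c))
    {x y : C} (f g : x ⟶ y) (h : F.map f = F.map g) : f = g := by
  have h2 : starOutHom k F hF x (F.obj y)
      (DirectSum.of (fun z : {z : C // F.obj z = F.obj y} => (x ⟶ z.1)) ⟨y, rfl⟩ f)
      = starOutHom k F hF x (F.obj y)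
      (DirectSum.of (fun z : {z : C // F.obj z = F.obj y} => (x ⟶ z.1)) ⟨y, rfl⟩ g) := by
    rw [starOutHom_of, starOutHom_of, h]
  have h3 := hinj x (F.obj y) h2
  have h4 := congrArg (fun ξ => ξ (⟨y, rfl⟩ : {z : C // F.obj z = F.obj y})) h3
  simpa [DirectSum.of_eq_same] using h4

lemma covering_map_ne_zero (F : C ⥤ B) (hF : IsLinearFunctor k F)
    (hinj : ∀ x c, Function.Injective (starOutHom k F hF x c))
    {x y : C} (f : x ⟶ y) (h : f ≠ 0) : F.map f ≠ 0 := by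
  intro h0
  exact h (covering_map_injective F hF hinj f 0 (by rw [h0, linear_map_zero F hF]))

lemma starOut_force (F : C ⥤ B) (hF : IsLinearFunctor k F)
    (hinj : ∀ x c, Function.Injective (starOutHom k F hF x c))
    {x : C} {c : B} (y₁ y₂ : {y : C // F.obj y = c})
    (f₁ : x ⟶ y₁.1) (f₂ : x ⟶ y₂.1)
    (h : F.map f₁ ≫ eqToHom y₁.2 = F.map f₂ ≫ eqToHom y₂.2)
    (hf₁ : f₁ ≠ 0) : y₁ = y₂ := by
  have h2 : starOutHom k F hF x c (DirectSum.of _ y₁ f₁)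
      = starOutHom k F hF x c (DirectSum.of _ y₂ f₂) := by
    rw [starOutHom_of, starOutHom_of, h]
  have h3 := hinj x c h2
  by_contra hne
  have h4 := congrArg (fun ξ => ξ y₁) h3
  simp only [DirectSum.of_eq_same] at h4
  rw [DirectSum.of_eq_of_ne _ _ _ hne] at h4
  exact hf₁ h4

lemma starIn_force (F : C ⥤ B) (hF : IsLinearFunctor k F)
    (hinj : ∀ x c, Function.Injective (starInHom k F hF x c))
    {x : C} {c : B} (y₁ y₂ : {y : C // F.obj y = c})
    (f₁ : y₁.1 ⟶ x) (f₂ : y₂.1 ⟶ x)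
    (h : eqToHom y₁.2.symm ≫ F.map f₁ = eqToHom y₂.2.symm ≫ F.map f₂)
    (hf₁ : f₁ ≠ 0) : y₁ = y₂ := by
  have h2 : starInHom k F hF x c (DirectSum.of _ y₁ f₁)
      = starInHom k F hF x c (DirectSum.of _ y₂ f₂) := by
    rw [starInHom_of, starInHom_of, h]
  have h3 := hinj x c h2
  by_contra hne
  have h4 := congrArg (fun ξ => ξ y₁) h3
  simp only [DirectSum.of_eq_same] at h4
  rw [DirectSum.of_eq_of_ne _ _ _ hne] at h4
  exact hf₁ h4

lemma directSum_exists_ne_zero {ι : Type u} (M : ι → Type v) [∀ i, AddCommMonoid (M i)]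
    (ξ : DirectSum ι M) (h : ξ ≠ 0) : ∃ i, ξ i ≠ 0 := by
  by_contra hc
  push_neg at hc
  exact h (DFinsupp.ext fun i => hc i)

end AuxLemmas2
section AuxLemmas3

open scoped Classical

variable {k : Type w} [CommRing k]
variable {C : Type u} [Category.{v} C] [Preadditive C] [CategoryTheory.Linear k C]
variable {B : Type u} [Category.{v} B] [Preadditive B] [CategoryTheory.Linear k B]
variable {D : Type u} [Category.{v} D] [Preadditive D] [CategoryTheory.Linear k D]

/-- Rigidity: two lifts through a covering that agree somewhere agree everywhere. -/
lemma lift_rigidity (G : D ⥤ B) (hG : IsLinearFunctor k G)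
    (hinj : ∀ x c, Function.Injective (starOutHom k G hG x c))
    (hinj' : ∀ x c, Function.Injective (starInHom k G hG x c))
    (hconn : IsConnectedKCat C)
    (P Q : C ⥤ D) (E : C ⥤ B) (hP : P ⋙ G = E) (hQ : Q ⋙ G = E)
    (hE : ∀ {a b : C} (f : a ⟶ b), f ≠ 0 → E.map f ≠ 0)
    (c₀ : C) (h₀ : P.obj c₀ = Q.obj c₀) : P = Q := by
  have hPm : ∀ {a b : C} (f : a ⟶ b),
      G.map (P.map f) = eqToHom (Functor.congr_obj hP a) ≫ E.map f
        ≫ eqToHom (Functor.congr_obj hP b).symm := fun f => Functor.congr_hom hP f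
  have hQm : ∀ {a b : C} (f : a ⟶ b),
      G.map (Q.map f) = eqToHom (Functor.congr_obj hQ a) ≫ E.map f
        ≫ eqToHom (Functor.congr_obj hQ b).symm := fun f => Functor.congr_hom hQ f
  have hPne : ∀ {a b : C} (f : a ⟶ b), f ≠ 0 → P.map f ≠ 0 := by
    intro a b f hf h0
    apply hE f hf
    have h1 := hPm f
    rw [h0, linear_map_zero G hG] at h1
    have h2 : E.map f = eqToHom (Functor.congr_obj hP a).symm
        ≫ (eqToHom (Functor.congr_obj hP a) ≫ E.map f
          ≫ eqToHom (Functor.congr_obj hP b).symm)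
        ≫ eqToHom (Functor.congr_obj hP b) := by simp
    rw [← h1] at h2
    rw [h2]; simp
  have hQne : ∀ {a b : C} (f : a ⟶ b), f ≠ 0 → Q.map f ≠ 0 := by
    intro a b f hf h0
    apply hE f hf
    have h1 := hQm f
    rw [h0, linear_map_zero G hG] at h1
    have h2 : E.map f = eqToHom (Functor.congr_obj hQ a).symm
        ≫ (eqToHom (Functor.congr_obj hQ a) ≫ E.map f
          ≫ eqToHom (Functor.congr_obj hQ b).symm)
        ≫ eqToHom (Functor.congr_obj hQ b) := by simp
    rw [← h1] at h2
    rw [h2]; simp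
  have fwd : ∀ {a b : C} (f : a ⟶ b), f ≠ 0 → P.obj a = Q.obj a → P.obj b = Q.obj b := by
    intro a b f hf hab
    have key := starOut_force G hG hinj
      (x := P.obj a) (c := E.obj b)
      ⟨P.obj b, Functor.congr_obj hP b⟩ ⟨Q.obj b, Functor.congr_obj hQ b⟩
      (P.map f) (eqToHom hab ≫ Q.map f) ?_ (hPne f hf)
    · exact congrArg Subtype.val key
    · rw [G.map_comp, eqToHom_map, hPm f, hQm f]
      simp
  have bwd : ∀ {a b : C} (f : a ⟶ b), f ≠ 0 → P.obj b = Q.obj b → P.obj a = Q.obj a := by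
    intro a b f hf hab
    have key := starIn_force G hG hinj'
      (x := P.obj b) (c := E.obj a)
      ⟨P.obj a, Functor.congr_obj hP a⟩ ⟨Q.obj a, Functor.congr_obj hQ a⟩
      (P.map f) (Q.map f ≫ eqToHom hab.symm) ?_ (hPne f hf)
    · exact congrArg Subtype.val key
    · rw [G.map_comp, eqToHom_map, hPm f, hQm f]
      simp
  have hobj : ∀ a, P.obj a = Q.obj a := by
    intro a
    have hiff : ∀ {s t : C},
        Relation.EqvGen (fun a b : C => ∃ f : a ⟶ b, f ≠ 0) s t →
        (P.obj s = Q.obj s ↔ P.obj t = Q.obj t) := by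
      intro s t h
      induction h with
      | rel x y hr => exact ⟨fun hx => fwd hr.choose hr.choose_spec hx,
          fun hy => bwd hr.choose hr.choose_spec hy⟩
      | refl x => exact Iff.rfl
      | symm x y _ ih => exact ih.symm
      | trans x y z _ _ ih1 ih2 => exact ih1.trans ih2
    exact (hiff (hconn c₀ a)).mp h₀
  refine CategoryTheory.Functor.ext hobj ?_
  intro a b f
  apply covering_map_injective G hG hinj
  rw [G.map_comp, G.map_comp, eqToHom_map, eqToHom_map, hPm f, hQm f]
  simp

end AuxLemmas3
section AuxLemmas4

open scoped Classical

variable {k : Type w} [CommRing k]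
variable {C : Type u} [Category.{v} C] [Preadditive C] [CategoryTheory.Linear k C]
variable {B : Type u} [Category.{v} B] [Preadditive B] [CategoryTheory.Linear k B]

lemma isLinear_comp {D : Type u} [Category.{v} D] [Preadditive D] [CategoryTheory.Linear k D]
    (P : C ⥤ B) (Q : B ⥤ D) (hP : IsLinearFunctor k P) (hQ : IsLinearFunctor k Q) :
    IsLinearFunctor k (P ⋙ Q) := by
  constructor
  · intro x y f g
    exact (congrArg Q.map (hP.1 x y f g)).trans (hQ.1 _ _ _ _)
  · intro x y r f
    exact (congrArg Q.map (hP.2 x y r f)).trans (hQ.2 _ _ _ _)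

lemma memAut1_comp (F : C ⥤ B) (n₁ n₂ : C ⥤ C)
    (h₁ : MemAut1 k F n₁) (h₂ : MemAut1 k F n₂) : MemAut1 k F (n₁ ⋙ n₂) := by
  obtain ⟨hl₁, ⟨m₁, hm₁, hm₁'⟩, hc₁⟩ := h₁
  obtain ⟨hl₂, ⟨m₂, hm₂, hm₂'⟩, hc₂⟩ := h₂
  refine ⟨isLinear_comp n₁ n₂ hl₁ hl₂, ⟨m₂ ⋙ m₁, ?_, ?_⟩, ?_⟩
  · rw [Functor.assoc, ← Functor.assoc n₂ m₂ m₁, hm₂, Functor.id_comp, hm₁]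
  · rw [Functor.assoc, ← Functor.assoc m₁ n₁ n₂, hm₁', Functor.id_comp, hm₂']
  · rw [Functor.assoc, hc₂, hc₁]

lemma eqToHom_conj_inj {x x' y y' : C} (p : x' = x) (q : y = y') (f g : x ⟶ y)
    (h : eqToHom p ≫ f ≫ eqToHom q = eqToHom p ≫ g ≫ eqToHom q) : f = g := by
  have h1 := (cancel_epi (eqToHom p)).mp h
  exact (cancel_mono (eqToHom q)).mp h1

lemma isLinear_of_inverse (n m : C ⥤ C) (hln : IsLinearFunctor k n)
    (hmn : n ⋙ m = 𝟭 C) (hnm : m ⋙ n = 𝟭 C) : IsLinearFunctor k m := by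
  have ninj : ∀ {x y : C} (f g : x ⟶ y), n.map f = n.map g → f = g := by
    intro x y f g h
    have h1 := Functor.congr_hom hmn f
    have h2 := Functor.congr_hom hmn g
    simp only [Functor.comp_map] at h1 h2
    rw [h] at h1
    exact eqToHom_conj_inj _ _ _ _ (h1.symm.trans h2)
  have nm : ∀ {x y : C} (f : x ⟶ y),
      n.map (m.map f) = eqToHom (Functor.congr_obj hnm x) ≫ f
        ≫ eqToHom (Functor.congr_obj hnm y).symm := by
    intro x y f
    exact Functor.congr_hom hnm f
  constructor
  · intro x y f g
    apply ninj
    rw [hln.1, nm, nm, nm]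
    simp [Preadditive.add_comp, Preadditive.comp_add]
  · intro x y r f
    apply ninj
    rw [hln.2, nm, nm]
    simp [CategoryTheory.Linear.smul_comp, CategoryTheory.Linear.comp_smul]

lemma memAut1_inv (F : C ⥤ B) (n m : C ⥤ C) (h : MemAut1 k F n)
    (hmn : n ⋙ m = 𝟭 C) (hnm : m ⋙ n = 𝟭 C) : MemAut1 k F m := by
  refine ⟨isLinear_of_inverse n m h.1 hmn hnm, ⟨n, hnm, hmn⟩, ?_⟩
  have := congrArg (fun P => m ⋙ P) h.2.2
  rw [← Functor.assoc, hnm, Functor.id_comp] at this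
  exact this.symm

end AuxLemmas4
section AuxLemmas5

open scoped Classical

variable {k : Type w} [CommRing k]
variable {C : Type u} [Category.{v} C] [Preadditive C] [CategoryTheory.Linear k C]
variable {B : Type u} [Category.{v} B] [Preadditive B] [CategoryTheory.Linear k B]

lemma support_out (F : C ⥤ B) (hF : IsLinearFunctor k F)
    (x y' : C) (c' : B) (hy' : F.obj y' = c')
    (hT : ∀ z : C, F.obj z = F.obj x → ∃ n : C ⥤ C, MemAut1 k F n ∧ n.obj x = z)
    (hsurjIn : Function.Surjective (starInHom k F hF y' (F.obj x)))
    (u : F.obj x ⟶ c') :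
    ∃ ζ : DirectSum {w : C // F.obj w = c'} (fun w => (x ⟶ w.1)),
      starOutHom k F hF x c' ζ = u ∧
      ∀ w, ζ w ≠ 0 → ∃ n' : C ⥤ C, MemAut1 k F n' ∧ n'.obj w.1 = y' := by
  choose n hn hobj using hT
  have hinv : ∀ (z : C) (hz : F.obj z = F.obj x),
      ∃ m : C ⥤ C, (n z hz) ⋙ m = 𝟭 C ∧ m ⋙ (n z hz) = 𝟭 C := fun z hz => (hn z hz).2.1
  choose m hm1 hm2 using hinv
  have hmem : ∀ z hz, MemAut1 k F (m z hz) := fun z hz =>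
    memAut1_inv F (n z hz) (m z hz) (hn z hz) (hm1 z hz) (hm2 z hz)
  have hobjw : ∀ z hz, F.obj ((m z hz).obj y') = c' := fun z hz =>
    (show F.obj ((m z hz).obj y') = F.obj y' from Functor.congr_obj (hmem z hz).2.2 y').trans hy'
  have hobjx : ∀ (z : {z : C // F.obj z = F.obj x}), x = (m z.1 z.2).obj z.1 := fun z => by
    have h1 : (m z.1 z.2).obj ((n z.1 z.2).obj x) = x := Functor.congr_obj (hm1 z.1 z.2) x
    rw [hobj z.1 z.2] at h1
    exact h1.symm
  set φ : ∀ z : {z : C // F.obj z = F.obj x},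
      (z.1 ⟶ y') →+ DirectSum {w : C // F.obj w = c'} (fun w => (x ⟶ w.1)) := fun z =>
    (DirectSum.of (fun w : {w : C // F.obj w = c'} => (x ⟶ w.1))
        ⟨(m z.1 z.2).obj y', hobjw z.1 z.2⟩).comp
      (AddMonoidHom.mk' (fun g => eqToHom (hobjx z) ≫ (m z.1 z.2).map g)
        (fun g g' => by
          dsimp only
          rw [(hmem z.1 z.2).1.1 _ _ g g', Preadditive.comp_add])) with hφdef
  have hφ : ∀ (z : {z : C // F.obj z = F.obj x}) (g : z.1 ⟶ y'),
      φ z g = DirectSum.of (fun w : {w : C // F.obj w = c'} => (x ⟶ w.1))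
        ⟨(m z.1 z.2).obj y', hobjw z.1 z.2⟩ (eqToHom (hobjx z) ≫ (m z.1 z.2).map g) :=
    fun z g => rfl
  set Ψ := DirectSum.toAddMonoid φ with hΨdef
  have hΨof : ∀ (z : {z : C // F.obj z = F.obj x}) (g : z.1 ⟶ y'),
      Ψ (DirectSum.of (fun z : {z : C // F.obj z = F.obj x} => (z.1 ⟶ y')) z g) = φ z g :=
    fun z g => DirectSum.toAddMonoid_of φ z g
  obtain ⟨η, hη⟩ := hsurjIn (u ≫ eqToHom hy'.symm)
  have key : ∀ η', starOutHom k F hF x c' (Ψ η') =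
      starInHom k F hF y' (F.obj x) η' ≫ eqToHom hy' := by
    intro η'
    refine DirectSum.induction_on η' ?_ ?_ ?_
    · simp
    · intro z g
      rw [hΨof z g, hφ z g, starOutHom_of, starInHom_of, F.map_comp, eqToHom_map]
      have hc : F.map ((m z.1 z.2).map g) = eqToHom (Functor.congr_obj (hmem z.1 z.2).2.2 z.1)
          ≫ F.map g ≫ eqToHom (Functor.congr_obj (hmem z.1 z.2).2.2 y').symm :=
        Functor.congr_hom (hmem z.1 z.2).2.2 g
      rw [hc]
      simp
    · intro ξ₁ ξ₂ ih₁ ih₂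
      simp only [map_add, Preadditive.add_comp, ih₁, ih₂]
  have supp : ∀ η' (w : {w : C // F.obj w = c'}), Ψ η' w ≠ 0 →
      ∃ n' : C ⥤ C, MemAut1 k F n' ∧ n'.obj w.1 = y' := by
    intro η'
    refine DirectSum.induction_on η' ?_ ?_ ?_
    · intro w hw; rw [map_zero] at hw; simp at hw
    · intro z g w hw
      rw [hΨof z g, hφ z g] at hw
      by_cases hwz : (⟨(m z.1 z.2).obj y', hobjw z.1 z.2⟩ : {w : C // F.obj w = c'}) = w
      · refine ⟨n z.1 z.2, hn z.1 z.2, ?_⟩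
        rw [← hwz]
        exact Functor.congr_obj (hm2 z.1 z.2) y'
      · rw [DirectSum.of_eq_of_ne _ _ _ (Ne.symm hwz)] at hw
        exact absurd rfl hw
    · intro ξ₁ ξ₂ ih₁ ih₂ w hw
      rw [map_add, DirectSum.add_apply] at hw
      by_cases h1 : Ψ ξ₁ w = 0
      · refine ih₂ w ?_
        intro h2
        rw [h1, h2, add_zero] at hw
        exact hw rfl
      · exact ih₁ w h1
  refine ⟨Ψ η, ?_, supp η⟩
  rw [key η, hη]
  simp

lemma support_in (F : C ⥤ B) (hF : IsLinearFunctor k F)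
    (x y' : C) (c' : B) (hy' : F.obj y' = c')
    (hT : ∀ z : C, F.obj z = F.obj x → ∃ n : C ⥤ C, MemAut1 k F n ∧ n.obj x = z)
    (hsurjOut : Function.Surjective (starOutHom k F hF y' (F.obj x)))
    (u : c' ⟶ F.obj x) :
    ∃ ζ : DirectSum {w : C // F.obj w = c'} (fun w => (w.1 ⟶ x)),
      starInHom k F hF x c' ζ = u ∧
      ∀ w, ζ w ≠ 0 → ∃ n' : C ⥤ C, MemAut1 k F n' ∧ n'.obj w.1 = y' := by
  choose n hn hobj using hT
  have hinv : ∀ (z : C) (hz : F.obj z = F.obj x),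
      ∃ m : C ⥤ C, (n z hz) ⋙ m = 𝟭 C ∧ m ⋙ (n z hz) = 𝟭 C := fun z hz => (hn z hz).2.1
  choose m hm1 hm2 using hinv
  have hmem : ∀ z hz, MemAut1 k F (m z hz) := fun z hz =>
    memAut1_inv F (n z hz) (m z hz) (hn z hz) (hm1 z hz) (hm2 z hz)
  have hobjw : ∀ z hz, F.obj ((m z hz).obj y') = c' := fun z hz =>
    (show F.obj ((m z hz).obj y') = F.obj y' from Functor.congr_obj (hmem z hz).2.2 y').trans hy'
  have hobjx : ∀ (z : {z : C // F.obj z = F.obj x}), (m z.1 z.2).obj z.1 = x := fun z => by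
    have h1 : (m z.1 z.2).obj ((n z.1 z.2).obj x) = x := Functor.congr_obj (hm1 z.1 z.2) x
    rw [hobj z.1 z.2] at h1
    exact h1
  set φ : ∀ z : {z : C // F.obj z = F.obj x},
      (y' ⟶ z.1) →+ DirectSum {w : C // F.obj w = c'} (fun w => (w.1 ⟶ x)) := fun z =>
    (DirectSum.of (fun w : {w : C // F.obj w = c'} => (w.1 ⟶ x))
        ⟨(m z.1 z.2).obj y', hobjw z.1 z.2⟩).comp
      (AddMonoidHom.mk' (fun g => (m z.1 z.2).map g ≫ eqToHom (hobjx z))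
        (fun g g' => by
          dsimp only
          rw [(hmem z.1 z.2).1.1 _ _ g g', Preadditive.add_comp])) with hφdef
  have hφ : ∀ (z : {z : C // F.obj z = F.obj x}) (g : y' ⟶ z.1),
      φ z g = DirectSum.of (fun w : {w : C // F.obj w = c'} => (w.1 ⟶ x))
        ⟨(m z.1 z.2).obj y', hobjw z.1 z.2⟩ ((m z.1 z.2).map g ≫ eqToHom (hobjx z)) :=
    fun z g => rfl
  set Ψ := DirectSum.toAddMonoid φ with hΨdef
  have hΨof : ∀ (z : {z : C // F.obj z = F.obj x}) (g : y' ⟶ z.1),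
      Ψ (DirectSum.of (fun z : {z : C // F.obj z = F.obj x} => (y' ⟶ z.1)) z g) = φ z g :=
    fun z g => DirectSum.toAddMonoid_of φ z g
  obtain ⟨η, hη⟩ := hsurjOut (eqToHom hy' ≫ u)
  have key : ∀ η', starInHom k F hF x c' (Ψ η') =
      eqToHom hy'.symm ≫ starOutHom k F hF y' (F.obj x) η' := by
    intro η'
    refine DirectSum.induction_on η' ?_ ?_ ?_
    · simp
    · intro z g
      rw [hΨof z g, hφ z g, starInHom_of, starOutHom_of, F.map_comp, eqToHom_map]
      have hc : F.map ((m z.1 z.2).map g) = eqToHom (Functor.congr_obj (hmem z.1 z.2).2.2 y')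
          ≫ F.map g ≫ eqToHom (Functor.congr_obj (hmem z.1 z.2).2.2 z.1).symm :=
        Functor.congr_hom (hmem z.1 z.2).2.2 g
      rw [hc]
      simp
    · intro ξ₁ ξ₂ ih₁ ih₂
      simp only [map_add, Preadditive.comp_add, ih₁, ih₂]
  have supp : ∀ η' (w : {w : C // F.obj w = c'}), Ψ η' w ≠ 0 →
      ∃ n' : C ⥤ C, MemAut1 k F n' ∧ n'.obj w.1 = y' := by
    intro η'
    refine DirectSum.induction_on η' ?_ ?_ ?_
    · intro w hw; rw [map_zero] at hw; simp at hw
    · intro z g w hw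
      rw [hΨof z g, hφ z g] at hw
      by_cases hwz : (⟨(m z.1 z.2).obj y', hobjw z.1 z.2⟩ : {w : C // F.obj w = c'}) = w
      · refine ⟨n z.1 z.2, hn z.1 z.2, ?_⟩
        rw [← hwz]
        exact Functor.congr_obj (hm2 z.1 z.2) y'
      · rw [DirectSum.of_eq_of_ne _ _ _ (Ne.symm hwz)] at hw
        exact absurd rfl hw
    · intro ξ₁ ξ₂ ih₁ ih₂ w hw
      rw [map_add, DirectSum.add_apply] at hw
      by_cases h1 : Ψ ξ₁ w = 0
      · refine ih₂ w ?_
        intro h2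
        rw [h1, h2, add_zero] at hw
        exact hw rfl
      · exact ih₁ w h1
  refine ⟨Ψ η, ?_, supp η⟩
  rw [key η, hη]
  simp

end AuxLemmas5
section AuxLemmas6

open scoped Classical

variable {k : Type w} [CommRing k]
variable {C : Type u} [Category.{v} C] [Preadditive C] [CategoryTheory.Linear k C]
variable {B : Type u} [Category.{v} B] [Preadditive B] [CategoryTheory.Linear k B]

lemma galois_all_fibres (F : C ⥤ B) (hF : IsLinearFunctor k F)
    (hsurj : Function.Surjective F.obj)
    (hbijOut : ∀ x c, Function.Bijective (starOutHom k F hF x c))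
    (hbijIn : ∀ x c, Function.Bijective (starInHom k F hF x c))
    (hconn : IsConnectedKCat C)
    (b₀ : B) (htrans : ∀ x y : C, F.obj x = b₀ → F.obj y = b₀ →
      ∃ n : C ⥤ C, MemAut1 k F n ∧ n.obj x = y) :
    ∀ x y : C, F.obj x = F.obj y → ∃ n : C ⥤ C, MemAut1 k F n ∧ n.obj x = y := by
  have fwd : ∀ (b b' : B),
      (∀ x y : C, F.obj x = b → F.obj y = b → ∃ n : C ⥤ C, MemAut1 k F n ∧ n.obj x = y) →
      (∃ β : b ⟶ b', β ≠ 0) →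
      ∀ y1 y2 : C, F.obj y1 = b' → F.obj y2 = b' →
        ∃ n : C ⥤ C, MemAut1 k F n ∧ n.obj y1 = y2 := by
    intro b b' hTb hβex y1 y2 hy1 hy2
    obtain ⟨β, hβ⟩ := hβex
    obtain ⟨x, hx⟩ := hsurj b
    have hu : (eqToHom hx ≫ β : F.obj x ⟶ b') ≠ 0 := by
      intro h0
      apply hβ
      have hb : β = eqToHom hx.symm ≫ (eqToHom hx ≫ β) := by simp
      rw [hb, h0]; simp
    have hTx : ∀ z : C, F.obj z = F.obj x → ∃ n : C ⥤ C, MemAut1 k F n ∧ n.obj x = z :=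
      fun z hz => hTb x z hx (hz.trans hx)
    obtain ⟨ζ₁, hζ₁, hs₁⟩ := support_out F hF x y1 b' hy1 hTx
      (hbijIn y1 (F.obj x)).2 (eqToHom hx ≫ β)
    obtain ⟨ζ₂, hζ₂, hs₂⟩ := support_out F hF x y2 b' hy2 hTx
      (hbijIn y2 (F.obj x)).2 (eqToHom hx ≫ β)
    have hζeq : ζ₁ = ζ₂ := (hbijOut x b').1 (hζ₁.trans hζ₂.symm)
    have hζne : ζ₁ ≠ 0 := by
      intro h0
      rw [h0, map_zero] at hζ₁
      exact hu hζ₁.symm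
    obtain ⟨w, hw⟩ := directSum_exists_ne_zero _ ζ₁ hζne
    obtain ⟨n₁, hn₁, ho₁⟩ := hs₁ w hw
    obtain ⟨n₂, hn₂, ho₂⟩ := hs₂ w (by rw [← hζeq]; exact hw)
    obtain ⟨m₁, hm₁, hm₁'⟩ := hn₁.2.1
    refine ⟨m₁ ⋙ n₂, memAut1_comp F m₁ n₂ (memAut1_inv F n₁ m₁ hn₁ hm₁ hm₁') hn₂, ?_⟩
    show n₂.obj (m₁.obj y1) = y2
    rw [← ho₁, show m₁.obj (n₁.obj w.1) = w.1 from Functor.congr_obj hm₁ w.1]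
    exact ho₂
  have bwd : ∀ (b b' : B),
      (∀ x y : C, F.obj x = b' → F.obj y = b' → ∃ n : C ⥤ C, MemAut1 k F n ∧ n.obj x = y) →
      (∃ β : b ⟶ b', β ≠ 0) →
      ∀ y1 y2 : C, F.obj y1 = b → F.obj y2 = b →
        ∃ n : C ⥤ C, MemAut1 k F n ∧ n.obj y1 = y2 := by
    intro b b' hTb hβex y1 y2 hy1 hy2
    obtain ⟨β, hβ⟩ := hβex
    obtain ⟨x, hx⟩ := hsurj b'
    have hu : (β ≫ eqToHom hx.symm : b ⟶ F.obj x) ≠ 0 := by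
      intro h0
      apply hβ
      have hb : β = (β ≫ eqToHom hx.symm) ≫ eqToHom hx := by simp
      rw [hb, h0]; simp
    have hTx : ∀ z : C, F.obj z = F.obj x → ∃ n : C ⥤ C, MemAut1 k F n ∧ n.obj x = z :=
      fun z hz => hTb x z hx (hz.trans hx)
    obtain ⟨ζ₁, hζ₁, hs₁⟩ := support_in F hF x y1 b hy1 hTx
      (hbijOut y1 (F.obj x)).2 (β ≫ eqToHom hx.symm)
    obtain ⟨ζ₂, hζ₂, hs₂⟩ := support_in F hF x y2 b hy2 hTx
      (hbijOut y2 (F.obj x)).2 (β ≫ eqToHom hx.symm)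
    have hζeq : ζ₁ = ζ₂ := (hbijIn x b).1 (hζ₁.trans hζ₂.symm)
    have hζne : ζ₁ ≠ 0 := by
      intro h0
      rw [h0, map_zero] at hζ₁
      exact hu hζ₁.symm
    obtain ⟨w, hw⟩ := directSum_exists_ne_zero _ ζ₁ hζne
    obtain ⟨n₁, hn₁, ho₁⟩ := hs₁ w hw
    obtain ⟨n₂, hn₂, ho₂⟩ := hs₂ w (by rw [← hζeq]; exact hw)
    obtain ⟨m₁, hm₁, hm₁'⟩ := hn₁.2.1
    refine ⟨m₁ ⋙ n₂, memAut1_comp F m₁ n₂ (memAut1_inv F n₁ m₁ hn₁ hm₁ hm₁') hn₂, ?_⟩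
    show n₂.obj (m₁.obj y1) = y2
    rw [← ho₁, show m₁.obj (n₁.obj w.1) = w.1 from Functor.congr_obj hm₁ w.1]
    exact ho₂
  have hstep : ∀ {s t : B}, Relation.EqvGen (fun a b : B => ∃ f : a ⟶ b, f ≠ 0) s t →
      ((∀ x y : C, F.obj x = s → F.obj y = s → ∃ n : C ⥤ C, MemAut1 k F n ∧ n.obj x = y) ↔
       (∀ x y : C, F.obj x = t → F.obj y = t → ∃ n : C ⥤ C, MemAut1 k F n ∧ n.obj x = y)) := by
    intro s t h
    induction h with
    | rel a b hr => exact ⟨fun h1 => fwd a b h1 hr, fun h1 => bwd a b h1 hr⟩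
    | refl a => exact Iff.rfl
    | symm a b _ ih => exact ih.symm
    | trans a b c _ _ ih1 ih2 => exact ih1.trans ih2
  have hBconn : ∀ b : B, Relation.EqvGen (fun a b : B => ∃ f : a ⟶ b, f ≠ 0) b₀ b := by
    intro b
    obtain ⟨y, hy⟩ := hsurj b
    obtain ⟨x₀, hx₀⟩ := hsurj b₀
    have hmapwalk : ∀ {s t : C}, Relation.EqvGen (fun a b : C => ∃ f : a ⟶ b, f ≠ 0) s t →
        Relation.EqvGen (fun a b : B => ∃ f : a ⟶ b, f ≠ 0) (F.obj s) (F.obj t) := by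
      intro s t h
      induction h with
      | rel a b hr => exact Relation.EqvGen.rel _ _ ⟨F.map hr.choose,
          covering_map_ne_zero F hF (fun x c => (hbijOut x c).1) _ hr.choose_spec⟩
      | refl a => exact Relation.EqvGen.refl _
      | symm a b _ ih => exact Relation.EqvGen.symm _ _ ih
      | trans a b c _ _ ih1 ih2 => exact Relation.EqvGen.trans _ _ _ ih1 ih2
    have h2 := hmapwalk (hconn x₀ y)
    rw [hx₀, hy] at h2
    exact h2
  intro x y hxy
  exact (hstep (hBconn (F.obj y))).mp htrans x y hxy rfl
end AuxLemmas6
section AuxLemmas7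

open scoped Classical

variable {k : Type w} [CommRing k]
variable {C : Type u} [Category.{v} C] [Preadditive C] [CategoryTheory.Linear k C]
variable {B : Type u} [Category.{v} B] [Preadditive B] [CategoryTheory.Linear k B]
variable {D : Type u} [Category.{v} D] [Preadditive D] [CategoryTheory.Linear k D]

lemma morphism_obj_surjective
    (F : C ⥤ B) (G : D ⥤ B) (H : C ⥤ D) (J : B ⥤ B)
    (hF : IsLinearFunctor k F)
    (hFbijOut : ∀ x c, Function.Bijective (starOutHom k F hF x c))
    (hFbijIn : ∀ x c, Function.Bijective (starInHom k F hF x c))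
    (hG : IsLinearFunctor k G)
    (hGbijOut : ∀ x c, Function.Bijective (starOutHom k G hG x c))
    (hGbijIn : ∀ x c, Function.Bijective (starInHom k G hG x c))
    (hDconn : IsConnectedKCat D)
    (hHJ : IsCoveringMorphism k F G H J)
    (c₀ : C) :
    Function.Surjective H.obj := by
  obtain ⟨linH, linJ, ⟨Jinv, hJ1, hJ2⟩, hJobj, hcomm⟩ := hHJ
  have hJinvobj : ∀ b, Jinv.obj b = b := by
    intro b
    have h1 : Jinv.obj (J.obj b) = b := Functor.congr_obj hJ1 b
    rw [hJobj b] at h1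
    exact h1
  have hGH : ∀ c : C, G.obj (H.obj c) = F.obj c := fun c =>
    (Functor.congr_obj hcomm c).trans (hJobj _)
  have hcommMap : ∀ {a b : C} (f : a ⟶ b), G.map (H.map f)
      = eqToHom (Functor.congr_obj hcomm a) ≫ J.map (F.map f)
        ≫ eqToHom (Functor.congr_obj hcomm b).symm := fun f => Functor.congr_hom hcomm f
  have hJJinv : ∀ {a b : B} (w : a ⟶ b), J.map (Jinv.map w)
      = eqToHom (Functor.congr_obj hJ2 a) ≫ w ≫ eqToHom (Functor.congr_obj hJ2 b).symm :=
    fun w => Functor.congr_hom hJ2 w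
  have fwd : ∀ (c : C) (d' : D) (v : H.obj c ⟶ d'), v ≠ 0 → ∃ c' : C, H.obj c' = d' := by
    intro c d' v hv
    have hp : F.obj c = Jinv.obj (G.obj (H.obj c)) := ((hGH c).symm).trans (hJinvobj _).symm
    have hq : Jinv.obj (G.obj d') = G.obj d' := hJinvobj _
    set u : F.obj c ⟶ G.obj d' := eqToHom hp ≫ Jinv.map (G.map v) ≫ eqToHom hq with hu
    obtain ⟨ξ, hξ⟩ := (hFbijOut c (G.obj d')).2 u
    have hHfib : ∀ (y : {y : C // F.obj y = G.obj d'}), G.obj (H.obj y.1) = G.obj d' :=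
      fun y => (hGH y.1).trans y.2
    set φ : ∀ y : {y : C // F.obj y = G.obj d'},
        (c ⟶ y.1) →+ DirectSum {w : D // G.obj w = G.obj d'} (fun w => (H.obj c ⟶ w.1)) :=
      fun y =>
      (DirectSum.of (fun w : {w : D // G.obj w = G.obj d'} => (H.obj c ⟶ w.1))
          ⟨H.obj y.1, hHfib y⟩).comp
        (AddMonoidHom.mk' (fun f => H.map f)
          (fun f f' => by dsimp only; rw [linH.1 _ _ f f'])) with hφdef
    set Φ := DirectSum.toAddMonoid φ with hΦdef
    have hΦof : ∀ (y : {y : C // F.obj y = G.obj d'}) (f : c ⟶ y.1),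
        Φ (DirectSum.of (fun y : {y : C // F.obj y = G.obj d'} => (c ⟶ y.1)) y f)
          = DirectSum.of (fun w : {w : D // G.obj w = G.obj d'} => (H.obj c ⟶ w.1))
              ⟨H.obj y.1, hHfib y⟩ (H.map f) :=
      fun y f => DirectSum.toAddMonoid_of φ y f
    have keyA : ∀ ξ', starOutHom k G hG (H.obj c) (G.obj d') (Φ ξ')
        = eqToHom (Functor.congr_obj hcomm c) ≫ J.map (starOutHom k F hF c (G.obj d') ξ')
          ≫ eqToHom (hJobj (G.obj d')) := by
      intro ξ'
      refine DirectSum.induction_on ξ' ?_ ?_ ?_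
      · rw [map_zero, map_zero, map_zero, linear_map_zero J linJ]
        simp
      · intro y f
        rw [hΦof y f, starOutHom_of, starOutHom_of, J.map_comp, eqToHom_map, hcommMap f]
        simp
      · intro ξ₁ ξ₂ ih₁ ih₂
        rw [map_add, map_add, map_add, linJ.1 _ _ _ _, ih₁, ih₂]
        simp [Preadditive.add_comp, Preadditive.comp_add]
    have keyB : eqToHom (Functor.congr_obj hcomm c) ≫ J.map u ≫ eqToHom (hJobj (G.obj d'))
        = G.map v := by
      rw [hu, J.map_comp, J.map_comp, eqToHom_map, eqToHom_map, hJJinv (G.map v)]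
      simp
    have heq : Φ ξ = DirectSum.of (fun w : {w : D // G.obj w = G.obj d'} => (H.obj c ⟶ w.1))
        ⟨d', rfl⟩ v := by
      apply (hGbijOut (H.obj c) (G.obj d')).1
      rw [keyA ξ, hξ, keyB, starOutHom_of]
      simp
    have hsupp : ∀ ξ' (w : {w : D // G.obj w = G.obj d'}), Φ ξ' w ≠ 0 →
        ∃ y : C, H.obj y = w.1 := by
      intro ξ'
      refine DirectSum.induction_on ξ' ?_ ?_ ?_
      · intro w hw; rw [map_zero] at hw; simp at hw
      · intro y f w hw
        rw [hΦof y f] at hw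
        by_cases hwy : (⟨H.obj y.1, hHfib y⟩ : {w : D // G.obj w = G.obj d'}) = w
        · exact ⟨y.1, congrArg Subtype.val hwy⟩
        · rw [DirectSum.of_eq_of_ne _ _ _ (Ne.symm hwy)] at hw
          exact absurd rfl hw
      · intro ξ₁ ξ₂ ih₁ ih₂ w hw
        rw [map_add, DirectSum.add_apply] at hw
        by_cases h1 : Φ ξ₁ w = 0
        · refine ih₂ w ?_
          intro h2
          rw [h1, h2, add_zero] at hw
          exact hw rfl
        · exact ih₁ w h1
    refine hsupp ξ ⟨d', rfl⟩ ?_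
    rw [heq, DirectSum.of_eq_same]
    exact hv
  have bwd : ∀ (c : C) (d' : D) (v : d' ⟶ H.obj c), v ≠ 0 → ∃ c' : C, H.obj c' = d' := by
    intro c d' v hv
    have hp : Jinv.obj (G.obj (H.obj c)) = F.obj c := (hJinvobj _).trans (hGH c)
    have hq : G.obj d' = Jinv.obj (G.obj d') := (hJinvobj _).symm
    set u : G.obj d' ⟶ F.obj c := eqToHom hq ≫ Jinv.map (G.map v) ≫ eqToHom hp with hu
    obtain ⟨ξ, hξ⟩ := (hFbijIn c (G.obj d')).2 u
    have hHfib : ∀ (y : {y : C // F.obj y = G.obj d'}), G.obj (H.obj y.1) = G.obj d' :=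
      fun y => (hGH y.1).trans y.2
    set φ : ∀ y : {y : C // F.obj y = G.obj d'},
        (y.1 ⟶ c) →+ DirectSum {w : D // G.obj w = G.obj d'} (fun w => (w.1 ⟶ H.obj c)) :=
      fun y =>
      (DirectSum.of (fun w : {w : D // G.obj w = G.obj d'} => (w.1 ⟶ H.obj c))
          ⟨H.obj y.1, hHfib y⟩).comp
        (AddMonoidHom.mk' (fun f => H.map f)
          (fun f f' => by dsimp only; rw [linH.1 _ _ f f'])) with hφdef
    set Φ := DirectSum.toAddMonoid φ with hΦdef
    have hΦof : ∀ (y : {y : C // F.obj y = G.obj d'}) (f : y.1 ⟶ c),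
        Φ (DirectSum.of (fun y : {y : C // F.obj y = G.obj d'} => (y.1 ⟶ c)) y f)
          = DirectSum.of (fun w : {w : D // G.obj w = G.obj d'} => (w.1 ⟶ H.obj c))
              ⟨H.obj y.1, hHfib y⟩ (H.map f) :=
      fun y f => DirectSum.toAddMonoid_of φ y f
    have keyA : ∀ ξ', starInHom k G hG (H.obj c) (G.obj d') (Φ ξ')
        = eqToHom (hJobj (G.obj d')).symm ≫ J.map (starInHom k F hF c (G.obj d') ξ')
          ≫ eqToHom (Functor.congr_obj hcomm c).symm := by
      intro ξ'
      refine DirectSum.induction_on ξ' ?_ ?_ ?_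
      · rw [map_zero, map_zero, map_zero, linear_map_zero J linJ]
        simp
      · intro y f
        rw [hΦof y f, starInHom_of, starInHom_of, J.map_comp, eqToHom_map, hcommMap f]
        simp
      · intro ξ₁ ξ₂ ih₁ ih₂
        rw [map_add, map_add, map_add, linJ.1 _ _ _ _, ih₁, ih₂]
        simp [Preadditive.add_comp, Preadditive.comp_add]
    have keyB : eqToHom (hJobj (G.obj d')).symm ≫ J.map u
        ≫ eqToHom (Functor.congr_obj hcomm c).symm = G.map v := by
      rw [hu, J.map_comp, J.map_comp, eqToHom_map, eqToHom_map, hJJinv (G.map v)]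
      simp
    have heq : Φ ξ = DirectSum.of (fun w : {w : D // G.obj w = G.obj d'} => (w.1 ⟶ H.obj c))
        ⟨d', rfl⟩ v := by
      apply (hGbijIn (H.obj c) (G.obj d')).1
      rw [keyA ξ, hξ, keyB, starInHom_of]
      simp
    have hsupp : ∀ ξ' (w : {w : D // G.obj w = G.obj d'}), Φ ξ' w ≠ 0 →
        ∃ y : C, H.obj y = w.1 := by
      intro ξ'
      refine DirectSum.induction_on ξ' ?_ ?_ ?_
      · intro w hw; rw [map_zero] at hw; simp at hw
      · intro y f w hw
        rw [hΦof y f] at hw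
        by_cases hwy : (⟨H.obj y.1, hHfib y⟩ : {w : D // G.obj w = G.obj d'}) = w
        · exact ⟨y.1, congrArg Subtype.val hwy⟩
        · rw [DirectSum.of_eq_of_ne _ _ _ (Ne.symm hwy)] at hw
          exact absurd rfl hw
      · intro ξ₁ ξ₂ ih₁ ih₂ w hw
        rw [map_add, DirectSum.add_apply] at hw
        by_cases h1 : Φ ξ₁ w = 0
        · refine ih₂ w ?_
          intro h2
          rw [h1, h2, add_zero] at hw
          exact hw rfl
        · exact ih₁ w h1
    refine hsupp ξ ⟨d', rfl⟩ ?_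
    rw [heq, DirectSum.of_eq_same]
    exact hv
  -- now use connectedness of D
  have hiff : ∀ {s t : D}, Relation.EqvGen (fun a b : D => ∃ f : a ⟶ b, f ≠ 0) s t →
      ((∃ c : C, H.obj c = s) ↔ (∃ c : C, H.obj c = t)) := by
    intro s t h
    induction h with
    | rel a b hr =>
        obtain ⟨f, hf⟩ := hr
        constructor
        · rintro ⟨c, rfl⟩
          exact fwd c b f hf
        · rintro ⟨c, rfl⟩
          exact bwd c a f hf
    | refl a => exact Iff.rfl
    | symm a b _ ih => exact ih.symm
    | trans a b c _ _ ih1 ih2 => exact ih1.trans ih2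
  intro d
  exact (hiff (hDconn (H.obj c₀) d)).mp ⟨c₀, rfl⟩

end AuxLemmas7
theorem galois_morphism_induces_group_surjection (k : Type w) [CommRing k]
    {C : Type u} [Category.{v} C] [Preadditive C] [CategoryTheory.Linear k C]
    {B : Type u} [Category.{v} B] [Preadditive B] [CategoryTheory.Linear k B]
    {D : Type u} [Category.{v} D] [Preadditive D] [CategoryTheory.Linear k D]
    (F : C ⥤ B) (G : D ⥤ B) (hF : IsGaloisCovering k F) (hG : IsGaloisCovering k G)
    (H : C ⥤ D) (J : B ⥤ B) (hHJ : IsCoveringMorphism k F G H J) :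
    ∃ Λ : (C ⥤ C) → (D ⥤ D),
      (∀ f : C ⥤ C, MemAut1 k F f → MemAut1 k G (Λ f) ∧ H ⋙ Λ f = f ⋙ H) ∧
      (∀ f₁ f₂ : C ⥤ C, MemAut1 k F f₁ → MemAut1 k F f₂ →
        Λ (f₁ ⋙ f₂) = Λ f₁ ⋙ Λ f₂) ∧
      (∀ g : D ⥤ D, MemAut1 k G g → ∃ f : C ⥤ C, MemAut1 k F f ∧ Λ f = g) ∧
      (∀ f : C ⥤ C, MemAut1 k F f → (Λ f = 𝟭 D ↔ f ⋙ H = H)) ∧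
      (∀ Λ' : (C ⥤ C) → (D ⥤ D),
        (∀ f : C ⥤ C, MemAut1 k F f → MemAut1 k G (Λ' f) ∧ H ⋙ Λ' f = f ⋙ H) →
        ∀ f : C ⥤ C, MemAut1 k F f → Λ' f = Λ f) := by
  classical
  obtain ⟨⟨hFlin, hFsurj, hFbijOut, hFbijIn⟩, hCconn, b₀F, htransF⟩ := hF
  obtain ⟨⟨hGlin, hGsurj, hGbijOut, hGbijIn⟩, hDconn, b₀G, htransG⟩ := hG
  have hHJ0 := hHJ
  obtain ⟨linH, linJ, ⟨Jinv, hJ1, hJ2⟩, hJobj, hcomm⟩ := hHJ0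
  have htransFall := galois_all_fibres F hFlin hFsurj hFbijOut hFbijIn hCconn b₀F htransF
  have htransGall := galois_all_fibres G hGlin hGsurj hGbijOut hGbijIn hDconn b₀G htransG
  have hGH : ∀ c : C, G.obj (H.obj c) = F.obj c := fun c =>
    (Functor.congr_obj hcomm c).trans (hJobj _)
  obtain ⟨c₀, hc₀⟩ := hFsurj b₀F
  have hJinvlin : IsLinearFunctor k Jinv := isLinear_of_inverse J Jinv linJ hJ1 hJ2
  -- F ⋙ J preserves nonzero morphisms
  have hEne : ∀ {a b : C} (f : a ⟶ b), f ≠ 0 → (F ⋙ J).map f ≠ 0 := by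
    intro a b f hf h0
    apply covering_map_ne_zero F hFlin (fun x c => (hFbijOut x c).1) f hf
    have h0' : J.map (F.map f) = 0 := h0
    have h1 : Jinv.map (J.map (F.map f))
        = eqToHom (Functor.congr_obj hJ1 (F.obj a)) ≫ F.map f
          ≫ eqToHom (Functor.congr_obj hJ1 (F.obj b)).symm :=
      Functor.congr_hom hJ1 (F.map f)
    rw [h0', linear_map_zero Jinv hJinvlin] at h1
    have h3 : F.map f = eqToHom (Functor.congr_obj hJ1 (F.obj a)).symm
        ≫ (eqToHom (Functor.congr_obj hJ1 (F.obj a)) ≫ F.map f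
          ≫ eqToHom (Functor.congr_obj hJ1 (F.obj b)).symm)
        ≫ eqToHom (Functor.congr_obj hJ1 (F.obj b)) := by simp
    rw [← h1] at h3
    rw [h3]; simp
  -- G preserves nonzero morphisms
  have hGne : ∀ {a b : D} (f : a ⟶ b), f ≠ 0 → G.map f ≠ 0 :=
    fun f hf => covering_map_ne_zero G hGlin (fun x c => (hGbijOut x c).1) f hf
  -- existence of the lift
  have exist : ∀ f : C ⥤ C, MemAut1 k F f → ∃ g : D ⥤ D, MemAut1 k G g ∧ H ⋙ g = f ⋙ H := by
    intro f hf
    have h1 : G.obj (H.obj c₀) = G.obj (H.obj (f.obj c₀)) := by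
      rw [hGH, hGH]
      exact (show F.obj (f.obj c₀) = F.obj c₀ from Functor.congr_obj hf.2.2 c₀).symm
    obtain ⟨g, hg, hgobj⟩ := htransGall (H.obj c₀) (H.obj (f.obj c₀)) h1
    refine ⟨g, hg, ?_⟩
    refine lift_rigidity G hGlin (fun x c => (hGbijOut x c).1) (fun x c => (hGbijIn x c).1)
      hCconn (H ⋙ g) (f ⋙ H) (F ⋙ J) ?_ ?_ hEne c₀ hgobj
    · show H ⋙ (g ⋙ G) = F ⋙ J
      rw [hg.2.2, hcomm]
    · show f ⋙ (H ⋙ G) = F ⋙ J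
      rw [hcomm]
      show (f ⋙ F) ⋙ J = F ⋙ J
      rw [hf.2.2]
  set Λ : (C ⥤ C) → (D ⥤ D) := fun f =>
    if h : MemAut1 k F f then (exist f h).choose else 𝟭 D with hΛdef
  have hΛ : ∀ (f : C ⥤ C) (hf : MemAut1 k F f),
      MemAut1 k G (Λ f) ∧ H ⋙ Λ f = f ⋙ H := by
    intro f hf
    rw [hΛdef]
    simp only [dif_pos hf]
    exact (exist f hf).choose_spec
  -- uniqueness principle
  have uniq2 : ∀ (f : C ⥤ C) (hf : MemAut1 k F f) (g : D ⥤ D),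
      g ⋙ G = G → H ⋙ g = f ⋙ H → g = Λ f := by
    intro f hf g hgG hgH
    refine lift_rigidity G hGlin (fun x c => (hGbijOut x c).1) (fun x c => (hGbijIn x c).1)
      hDconn g (Λ f) G hgG ((hΛ f hf).1).2.2 hGne (H.obj c₀) ?_
    have e1 : g.obj (H.obj c₀) = H.obj (f.obj c₀) := Functor.congr_obj hgH c₀
    have e2 : (Λ f).obj (H.obj c₀) = H.obj (f.obj c₀) := Functor.congr_obj ((hΛ f hf).2) c₀
    rw [e1, e2]
  have memid : MemAut1 k G (𝟭 D) :=
    ⟨⟨fun _ _ _ _ => rfl, fun _ _ _ _ => rfl⟩, ⟨𝟭 D, Functor.id_comp _, Functor.id_comp _⟩,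
      Functor.id_comp G⟩
  refine ⟨Λ, hΛ, ?_, ?_, ?_, ?_⟩
  · -- group homomorphism
    intro f₁ f₂ hf₁ hf₂
    have hmem12 : MemAut1 k F (f₁ ⋙ f₂) := memAut1_comp F f₁ f₂ hf₁ hf₂
    have hmemΛ : (Λ f₁ ⋙ Λ f₂) ⋙ G = G := by
      show Λ f₁ ⋙ (Λ f₂ ⋙ G) = G
      rw [((hΛ f₂ hf₂).1).2.2, ((hΛ f₁ hf₁).1).2.2]
    have hcommΛ : H ⋙ (Λ f₁ ⋙ Λ f₂) = (f₁ ⋙ f₂) ⋙ H := by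
      show (H ⋙ Λ f₁) ⋙ Λ f₂ = (f₁ ⋙ f₂) ⋙ H
      rw [(hΛ f₁ hf₁).2]
      show f₁ ⋙ (H ⋙ Λ f₂) = (f₁ ⋙ f₂) ⋙ H
      rw [(hΛ f₂ hf₂).2]
      rfl
    exact (uniq2 (f₁ ⋙ f₂) hmem12 (Λ f₁ ⋙ Λ f₂) hmemΛ hcommΛ).symm
  · -- surjectivity
    intro g hg
    have Hsurj := morphism_obj_surjective F G H J hFlin hFbijOut hFbijIn hGlin hGbijOut hGbijIn
      hDconn hHJ c₀
    obtain ⟨c₁, hc₁⟩ := Hsurj (g.obj (H.obj c₀))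
    have e1 : G.obj (g.obj (H.obj c₀)) = G.obj (H.obj c₀) := Functor.congr_obj hg.2.2 (H.obj c₀)
    have hFc₁ : F.obj c₀ = F.obj c₁ := by
      rw [← hGH c₁, hc₁, e1, hGH c₀]
    obtain ⟨f, hf, hfobj⟩ := htransFall c₀ c₁ hFc₁
    refine ⟨f, hf, ?_⟩
    refine (uniq2 f hf g hg.2.2 ?_).symm
    refine lift_rigidity G hGlin (fun x c => (hGbijOut x c).1) (fun x c => (hGbijIn x c).1)
      hCconn (H ⋙ g) (f ⋙ H) (F ⋙ J) ?_ ?_ hEne c₀ ?_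
    · show H ⋙ (g ⋙ G) = F ⋙ J
      rw [hg.2.2, hcomm]
    · show f ⋙ (H ⋙ G) = F ⋙ J
      rw [hcomm]
      show (f ⋙ F) ⋙ J = F ⋙ J
      rw [hf.2.2]
    · show g.obj (H.obj c₀) = H.obj (f.obj c₀)
      rw [hfobj, hc₁]
  · -- kernel
    intro f hf
    constructor
    · intro h1
      have h2 := (hΛ f hf).2
      rw [h1] at h2
      exact h2.symm.trans (Functor.comp_id H)
    · intro h1
      exact (uniq2 f hf (𝟭 D) (Functor.id_comp G) ((Functor.comp_id H).trans h1.symm)).symm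
  · -- uniqueness of Λ
    intro Λ' hΛ' f hf
    exact uniq2 f hf (Λ' f) ((hΛ' f hf).1).2.2 (hΛ' f hf).2
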